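/- (Lossless dimensionality reduction) Let Â₀ ∈ ℝ^{n×n}, B̂₀ ∈ ℝ^{n×p}, Ĉ₀ ∈ ℝ^{q×n}, D̂₀ ∈ ℝ^{q×p}, M₀ ∈ ℝ^{q×q} symmetric, and let d ≥ 1. Set Â = Â₀⊗I_d, B̂ = B̂₀⊗I_d, Ĉ = Ĉ₀⊗I_d, D̂ = D̂₀⊗I_d, M = M₀⊗I_d. Then there exists P ≻ 0 (of size nd) and λ ≥ 0 satisfying [[ÂᵀPÂ - ρ²P, ÂᵀPB̂],[B̂ᵀPÂ, B̂ᵀPB̂]] + λ[Ĉ D̂]ᵀM[Ĉ D̂] ⪯ 0 if and only if there exists P₀ ≻ 0 (of size n) and λ ≥ 0 satisfying the same LMI with (Â₀, B̂₀, Ĉ₀, D̂₀, M₀, P₀). -/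

import Mathlib

open Matrix Kronecker

section Helpers

variable {d : ℕ}

private lemma kron_one_T {l m : Type*} (A : Matrix l m ℝ) :
    (A ⊗ₖ (1 : Matrix (Fin d) (Fin d) ℝ))ᵀ = Aᵀ ⊗ₖ (1 : Matrix (Fin d) (Fin d) ℝ) := by
  ext ⟨i, k⟩ ⟨j, l⟩
  simp [Matrix.one_apply, eq_comm]

private lemma quad_kron_one {m : Type*} [Fintype m] (N : Matrix m m ℝ) (x : m × Fin d → ℝ) :
    x ⬝ᵥ ((N ⊗ₖ (1 : Matrix (Fin d) (Fin d) ℝ)) *ᵥ x)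
      = ∑ k : Fin d, (fun i => x (i, k)) ⬝ᵥ (N *ᵥ fun i => x (i, k)) := by
  simp only [dotProduct, mulVec, kroneckerMap_apply, one_apply, Fintype.sum_prod_type,
    mul_ite, ite_mul, mul_one, mul_zero, zero_mul, Finset.sum_ite_eq, Finset.sum_ite_eq',
    Finset.mem_univ, if_true]
  rw [Finset.sum_comm]

private lemma psd_kron_one {m : Type*} [Fintype m] [DecidableEq m] {N : Matrix m m ℝ}
    (hN : N.PosSemidef) : (N ⊗ₖ (1 : Matrix (Fin d) (Fin d) ℝ)).PosSemidef := by
  rw [posSemidef_iff_dotProduct_mulVec]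
  constructor
  · have h1 : (N ⊗ₖ (1 : Matrix (Fin d) (Fin d) ℝ))ᴴ = Nᴴ ⊗ₖ (1 : Matrix (Fin d) (Fin d) ℝ)ᴴ := by
      ext ⟨i, k⟩ ⟨j, l⟩; simp [conjTranspose_apply, Matrix.one_apply, eq_comm]
    rw [IsHermitian, h1, hN.1, conjTranspose_one]
  · intro x
    rw [show (star x : _ → ℝ) = x from star_trivial x, quad_kron_one]
    exact Finset.sum_nonneg fun k _ => by simpa using hN.dotProduct_mulVec_nonneg (fun i => x (i, k))

private lemma posdef_kron_one {m : Type*} [Fintype m] [DecidableEq m] {N : Matrix m m ℝ}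
    (hN : N.PosDef) : (N ⊗ₖ (1 : Matrix (Fin d) (Fin d) ℝ)).PosDef := by
  refine posDef_iff_dotProduct_mulVec.mpr ⟨(psd_kron_one (d := d) hN.posSemidef).1, fun x hx => ?_⟩
  rw [show (star x : _ → ℝ) = x from star_trivial x, quad_kron_one]
  obtain ⟨⟨i₀, k₀⟩, hik⟩ := Function.ne_iff.mp hx
  refine Finset.sum_pos' (fun k _ => by simpa using hN.posSemidef.dotProduct_mulVec_nonneg (fun i => x (i, k)))
    ⟨k₀, Finset.mem_univ _, ?_⟩
  simpa using hN.dotProduct_mulVec_pos (x := fun i => x (i, k₀)) (Function.ne_iff.mpr ⟨i₀, hik⟩)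

private lemma posdef_submatrix {N M : Type*} [Fintype N] [DecidableEq N] [Fintype M]
    [DecidableEq M] {P : Matrix N N ℝ} (hP : P.PosDef) (f : M → N)
    (hf : Function.Injective f) : (P.submatrix f f).PosDef := by
  have hsub : P.submatrix f f = ((1 : Matrix N N ℝ).submatrix id f)ᴴ * P *
      ((1 : Matrix N N ℝ).submatrix id f) := by
    ext a b
    simp [Matrix.mul_apply, Matrix.one_apply, ite_mul, mul_ite, Finset.sum_ite_eq,
      Finset.sum_ite_eq']
  rw [hsub]
  refine posDef_iff_dotProduct_mulVec.mpr ⟨isHermitian_conjTranspose_mul_mul _ hP.1, fun x hx => ?_⟩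
  have hEx : ((1 : Matrix N N ℝ).submatrix id f) *ᵥ x ≠ 0 := by
    obtain ⟨i₀, hi₀⟩ := Function.ne_iff.mp hx
    intro h0
    have h1 : (((1 : Matrix N N ℝ).submatrix id f) *ᵥ x) (f i₀) = x i₀ := by
      simp [Matrix.mulVec, dotProduct, Matrix.one_apply, hf.eq_iff, Finset.sum_ite_eq,
        Finset.sum_ite_eq']
    rw [h0] at h1
    exact hi₀ (by simpa using h1.symm)
  simpa only [star_mulVec, dotProduct_mulVec, vecMul_vecMul] using hP.dotProduct_mulVec_pos hEx

private lemma slice_mul {r r' m m' : Type*} [Fintype r] [Fintype r'] [Fintype m] [Fintype m']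
    (A : Matrix r m ℝ) (B : Matrix r' m' ℝ) (P : Matrix (r × Fin d) (r' × Fin d) ℝ) (k0 : Fin d) :
    ((A ⊗ₖ (1 : Matrix (Fin d) (Fin d) ℝ))ᵀ * P * (B ⊗ₖ (1 : Matrix (Fin d) (Fin d) ℝ))).submatrix
        (fun i => (i, k0)) (fun j => (j, k0))
      = Aᵀ * (P.submatrix (fun a => (a, k0)) (fun b => (b, k0))) * B := by
  ext i j
  simp only [submatrix_apply, Matrix.mul_apply, transpose_apply, kroneckerMap_apply, one_apply,
    Fintype.sum_prod_type, mul_ite, ite_mul, mul_one, mul_zero, zero_mul, one_mul,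
    Finset.sum_ite_eq, Finset.sum_ite_eq', Finset.mem_univ, if_true, Finset.sum_mul,
    Finset.mul_sum]

private lemma fromBlocks_submatrix_map {α₁ α₂ β₁ β₂ γ₁ γ₂ δ₁ δ₂ : Type*}
    (X : Matrix α₁ γ₁ ℝ) (Y : Matrix α₁ δ₁ ℝ) (Z : Matrix β₁ γ₁ ℝ) (W : Matrix β₁ δ₁ ℝ)
    (f : α₂ → α₁) (g : β₂ → β₁) (f' : γ₂ → γ₁) (g' : δ₂ → δ₁) :
    (Matrix.fromBlocks X Y Z W).submatrix (Sum.map f g) (Sum.map f' g')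
      = Matrix.fromBlocks (X.submatrix f f') (Y.submatrix f g')
          (Z.submatrix g f') (W.submatrix g g') := by
  ext (i | i) (j | j) <;> simp

private lemma fromCols_slice {q' m m' : Type*} [Fintype q'] [Fintype m] [Fintype m']
    (M : Matrix q' q' ℝ) (C : Matrix q' m ℝ) (D : Matrix q' m' ℝ) (k0 : Fin d) :
    ((Matrix.fromCols (C ⊗ₖ (1 : Matrix (Fin d) (Fin d) ℝ))
            (D ⊗ₖ (1 : Matrix (Fin d) (Fin d) ℝ)))ᵀ *
        (M ⊗ₖ (1 : Matrix (Fin d) (Fin d) ℝ)) *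
        Matrix.fromCols (C ⊗ₖ (1 : Matrix (Fin d) (Fin d) ℝ))
            (D ⊗ₖ (1 : Matrix (Fin d) (Fin d) ℝ))).submatrix
        (Sum.map (fun i => (i, k0)) (fun j => (j, k0)))
        (Sum.map (fun i => (i, k0)) (fun j => (j, k0)))
      = (Matrix.fromCols C D)ᵀ * M * Matrix.fromCols C D := by
  ext (i | i) (j | j) <;>
  simp only [submatrix_apply, Sum.map_inl, Sum.map_inr, Matrix.mul_apply, transpose_apply,
    fromCols_apply_inl, fromCols_apply_inr, kroneckerMap_apply, one_apply,
    Fintype.sum_prod_type, mul_ite, ite_mul, mul_one, mul_zero, zero_mul, one_mul,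
    Finset.sum_ite_eq, Finset.sum_ite_eq', Finset.mem_univ, if_true, Finset.sum_mul,
    Finset.mul_sum]

private lemma fromCols_kron_sandwich {q' m m' : Type*} [Fintype q'] [Fintype m] [Fintype m']
    (M : Matrix q' q' ℝ) (C : Matrix q' m ℝ) (D : Matrix q' m' ℝ) :
    (Matrix.fromCols (C ⊗ₖ (1 : Matrix (Fin d) (Fin d) ℝ))
            (D ⊗ₖ (1 : Matrix (Fin d) (Fin d) ℝ)))ᵀ *
        (M ⊗ₖ (1 : Matrix (Fin d) (Fin d) ℝ)) *
        Matrix.fromCols (C ⊗ₖ (1 : Matrix (Fin d) (Fin d) ℝ))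
            (D ⊗ₖ (1 : Matrix (Fin d) (Fin d) ℝ))
      = (((Matrix.fromCols C D)ᵀ * M * Matrix.fromCols C D) ⊗ₖ
          (1 : Matrix (Fin d) (Fin d) ℝ)).submatrix
          (Sum.elim (fun x : m × Fin d => (Sum.inl x.1, x.2))
            (fun x : m' × Fin d => (Sum.inr x.1, x.2)))
          (Sum.elim (fun x : m × Fin d => (Sum.inl x.1, x.2))
            (fun x : m' × Fin d => (Sum.inr x.1, x.2))) := by
  ext (⟨i, k⟩ | ⟨i, k⟩) (⟨j, l⟩ | ⟨j, l⟩) <;>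
  simp only [submatrix_apply, Sum.elim_inl, Sum.elim_inr, Matrix.mul_apply, transpose_apply,
    fromCols_apply_inl, fromCols_apply_inr, kroneckerMap_apply, one_apply,
    Fintype.sum_prod_type, mul_ite, ite_mul, mul_one, mul_zero, zero_mul, one_mul,
    Finset.sum_ite_eq, Finset.sum_ite_eq', Finset.mem_univ, if_true, Finset.sum_mul,
    Finset.mul_sum] <;>
  rcases eq_or_ne k l with h | h <;>
  first
    | simp [h, Ne.symm h]
    | (subst h
       simp only [eq_self_iff_true, if_true, ite_true])

private lemma fromBlocks_kron {α β γ δ' : Type*} (X : Matrix α γ ℝ) (Y : Matrix α δ' ℝ)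
    (Z : Matrix β γ ℝ) (W : Matrix β δ' ℝ) :
    Matrix.fromBlocks (X ⊗ₖ (1 : Matrix (Fin d) (Fin d) ℝ)) (Y ⊗ₖ (1 : Matrix (Fin d) (Fin d) ℝ))
        (Z ⊗ₖ (1 : Matrix (Fin d) (Fin d) ℝ)) (W ⊗ₖ (1 : Matrix (Fin d) (Fin d) ℝ))
      = ((Matrix.fromBlocks X Y Z W) ⊗ₖ (1 : Matrix (Fin d) (Fin d) ℝ)).submatrix
          (Sum.elim (fun x : α × Fin d => (Sum.inl x.1, x.2))
            (fun x : β × Fin d => (Sum.inr x.1, x.2)))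
          (Sum.elim (fun x : γ × Fin d => (Sum.inl x.1, x.2))
            (fun x : δ' × Fin d => (Sum.inr x.1, x.2))) := by
  ext (⟨i, k⟩ | ⟨i, k⟩) (⟨j, l⟩ | ⟨j, l⟩) <;> simp

private lemma sub_kron_one {α β : Type*} (X Y : Matrix α β ℝ) :
    (X - Y) ⊗ₖ (1 : Matrix (Fin d) (Fin d) ℝ)
      = X ⊗ₖ (1 : Matrix (Fin d) (Fin d) ℝ) - Y ⊗ₖ (1 : Matrix (Fin d) (Fin d) ℝ) := by
  ext ⟨i, k⟩ ⟨j, l⟩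
  simp [sub_mul]

private lemma neg_kron_one {α β : Type*} (X : Matrix α β ℝ) :
    (-X) ⊗ₖ (1 : Matrix (Fin d) (Fin d) ℝ) = -(X ⊗ₖ (1 : Matrix (Fin d) (Fin d) ℝ)) := by
  ext ⟨i, k⟩ ⟨j, l⟩
  simp [neg_mul]

private lemma sandwich_kron_one {r r' m m' : Type*} [Fintype r] [Fintype r'] [Fintype m]
    [Fintype m'] (A : Matrix r m ℝ) (B : Matrix r' m' ℝ) (P : Matrix r r' ℝ) :
    (A ⊗ₖ (1 : Matrix (Fin d) (Fin d) ℝ))ᵀ * (P ⊗ₖ (1 : Matrix (Fin d) (Fin d) ℝ)) *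
        (B ⊗ₖ (1 : Matrix (Fin d) (Fin d) ℝ))
      = (Aᵀ * P * B) ⊗ₖ (1 : Matrix (Fin d) (Fin d) ℝ) := by
  rw [kron_one_T, ← Matrix.one_mul (1 : Matrix (Fin d) (Fin d) ℝ), ← mul_kronecker_mul]
  rw [← Matrix.one_mul (1 * 1 : Matrix (Fin d) (Fin d) ℝ), ← mul_kronecker_mul]
  simp

end Helpers

/-- Lossless dimensionality reduction: the Kronecker-expanded IQC LMI (with blocks
`X₀ ⊗ I_d`) is feasible iff the reduced (`d = 1`) LMI is feasible. -/
theorem lossless_dimensionality_reduction {n p q d : ℕ} (hd : 1 ≤ d) (ρ : ℝ) (hρ : 0 ≤ ρ)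
    (A₀ : Matrix (Fin n) (Fin n) ℝ) (B₀ : Matrix (Fin n) (Fin p) ℝ)
    (C₀ : Matrix (Fin q) (Fin n) ℝ) (D₀ : Matrix (Fin q) (Fin p) ℝ)
    (M₀ : Matrix (Fin q) (Fin q) ℝ) (hM₀ : M₀.IsHermitian) :
    (∃ (P : Matrix (Fin n × Fin d) (Fin n × Fin d) ℝ) (lam : ℝ), P.PosDef ∧ 0 ≤ lam ∧
      (-(Matrix.fromBlocks
          ((A₀ ⊗ₖ (1 : Matrix (Fin d) (Fin d) ℝ))ᵀ * P * (A₀ ⊗ₖ (1 : Matrix (Fin d) (Fin d) ℝ))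
              - ρ ^ 2 • P)
          ((A₀ ⊗ₖ (1 : Matrix (Fin d) (Fin d) ℝ))ᵀ * P * (B₀ ⊗ₖ (1 : Matrix (Fin d) (Fin d) ℝ)))
          ((B₀ ⊗ₖ (1 : Matrix (Fin d) (Fin d) ℝ))ᵀ * P * (A₀ ⊗ₖ (1 : Matrix (Fin d) (Fin d) ℝ)))
          ((B₀ ⊗ₖ (1 : Matrix (Fin d) (Fin d) ℝ))ᵀ * P * (B₀ ⊗ₖ (1 : Matrix (Fin d) (Fin d) ℝ))) +
        lam • ((Matrix.fromCols (C₀ ⊗ₖ (1 : Matrix (Fin d) (Fin d) ℝ))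
                  (D₀ ⊗ₖ (1 : Matrix (Fin d) (Fin d) ℝ)))ᵀ *
                (M₀ ⊗ₖ (1 : Matrix (Fin d) (Fin d) ℝ)) *
                Matrix.fromCols (C₀ ⊗ₖ (1 : Matrix (Fin d) (Fin d) ℝ))
                  (D₀ ⊗ₖ (1 : Matrix (Fin d) (Fin d) ℝ))))).PosSemidef)
    ↔
    (∃ (P₀ : Matrix (Fin n) (Fin n) ℝ) (lam : ℝ), P₀.PosDef ∧ 0 ≤ lam ∧
      (-(Matrix.fromBlocks (A₀ᵀ * P₀ * A₀ - ρ ^ 2 • P₀) (A₀ᵀ * P₀ * B₀)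
          (B₀ᵀ * P₀ * A₀) (B₀ᵀ * P₀ * B₀) +
        lam • ((Matrix.fromCols C₀ D₀)ᵀ * M₀ * Matrix.fromCols C₀ D₀))).PosSemidef) := by
  constructor
  · rintro ⟨P, lam, hP, hlam, hpsd⟩
    refine ⟨P.submatrix (fun i => (i, ⟨0, hd⟩)) (fun i => (i, ⟨0, hd⟩)), lam,
      posdef_submatrix hP _ (fun a b hab => by simpa [Prod.ext_iff] using hab), hlam, ?_⟩
    have h := hpsd.submatrix
      (Sum.map (fun i : Fin n => (i, (⟨0, hd⟩ : Fin d))) (fun j : Fin p => (j, (⟨0, hd⟩ : Fin d))))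
    have e1 :
        ((Matrix.fromBlocks
          ((A₀ ⊗ₖ (1 : Matrix (Fin d) (Fin d) ℝ))ᵀ * P * (A₀ ⊗ₖ (1 : Matrix (Fin d) (Fin d) ℝ))
              - ρ ^ 2 • P)
          ((A₀ ⊗ₖ (1 : Matrix (Fin d) (Fin d) ℝ))ᵀ * P * (B₀ ⊗ₖ (1 : Matrix (Fin d) (Fin d) ℝ)))
          ((B₀ ⊗ₖ (1 : Matrix (Fin d) (Fin d) ℝ))ᵀ * P * (A₀ ⊗ₖ (1 : Matrix (Fin d) (Fin d) ℝ)))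
          ((B₀ ⊗ₖ (1 : Matrix (Fin d) (Fin d) ℝ))ᵀ * P * (B₀ ⊗ₖ (1 : Matrix (Fin d) (Fin d) ℝ))) +
        lam • ((Matrix.fromCols (C₀ ⊗ₖ (1 : Matrix (Fin d) (Fin d) ℝ))
                  (D₀ ⊗ₖ (1 : Matrix (Fin d) (Fin d) ℝ)))ᵀ *
                (M₀ ⊗ₖ (1 : Matrix (Fin d) (Fin d) ℝ)) *
                Matrix.fromCols (C₀ ⊗ₖ (1 : Matrix (Fin d) (Fin d) ℝ))
                  (D₀ ⊗ₖ (1 : Matrix (Fin d) (Fin d) ℝ)))).submatrix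
          (Sum.map (fun i : Fin n => (i, (⟨0, hd⟩ : Fin d)))
            (fun j : Fin p => (j, (⟨0, hd⟩ : Fin d))))
          (Sum.map (fun i : Fin n => (i, (⟨0, hd⟩ : Fin d)))
            (fun j : Fin p => (j, (⟨0, hd⟩ : Fin d)))))
        = Matrix.fromBlocks
            (A₀ᵀ * (P.submatrix (fun i => (i, ⟨0, hd⟩)) (fun i => (i, ⟨0, hd⟩))) * A₀
              - ρ ^ 2 • (P.submatrix (fun i => (i, ⟨0, hd⟩)) (fun i => (i, ⟨0, hd⟩))))
            (A₀ᵀ * (P.submatrix (fun i => (i, ⟨0, hd⟩)) (fun i => (i, ⟨0, hd⟩))) * B₀)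
            (B₀ᵀ * (P.submatrix (fun i => (i, ⟨0, hd⟩)) (fun i => (i, ⟨0, hd⟩))) * A₀)
            (B₀ᵀ * (P.submatrix (fun i => (i, ⟨0, hd⟩)) (fun i => (i, ⟨0, hd⟩))) * B₀) +
          lam • ((Matrix.fromCols C₀ D₀)ᵀ * M₀ * Matrix.fromCols C₀ D₀) := by
      have hadd : ∀ (X Y : Matrix ((Fin n × Fin d) ⊕ (Fin p × Fin d))
          ((Fin n × Fin d) ⊕ (Fin p × Fin d)) ℝ),
          (X + Y).submatrix
            (Sum.map (fun i : Fin n => (i, (⟨0, hd⟩ : Fin d)))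
              (fun j : Fin p => (j, (⟨0, hd⟩ : Fin d))))
            (Sum.map (fun i : Fin n => (i, (⟨0, hd⟩ : Fin d)))
              (fun j : Fin p => (j, (⟨0, hd⟩ : Fin d))))
          = X.submatrix
            (Sum.map (fun i : Fin n => (i, (⟨0, hd⟩ : Fin d)))
              (fun j : Fin p => (j, (⟨0, hd⟩ : Fin d))))
            (Sum.map (fun i : Fin n => (i, (⟨0, hd⟩ : Fin d)))
              (fun j : Fin p => (j, (⟨0, hd⟩ : Fin d))))
            + Y.submatrix
            (Sum.map (fun i : Fin n => (i, (⟨0, hd⟩ : Fin d)))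
              (fun j : Fin p => (j, (⟨0, hd⟩ : Fin d))))
            (Sum.map (fun i : Fin n => (i, (⟨0, hd⟩ : Fin d)))
              (fun j : Fin p => (j, (⟨0, hd⟩ : Fin d)))) := fun _ _ => rfl
      have hsmul : ∀ (c : ℝ) (X : Matrix ((Fin n × Fin d) ⊕ (Fin p × Fin d))
          ((Fin n × Fin d) ⊕ (Fin p × Fin d)) ℝ),
          (c • X).submatrix
            (Sum.map (fun i : Fin n => (i, (⟨0, hd⟩ : Fin d)))
              (fun j : Fin p => (j, (⟨0, hd⟩ : Fin d))))
            (Sum.map (fun i : Fin n => (i, (⟨0, hd⟩ : Fin d)))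
              (fun j : Fin p => (j, (⟨0, hd⟩ : Fin d))))
          = c • X.submatrix
            (Sum.map (fun i : Fin n => (i, (⟨0, hd⟩ : Fin d)))
              (fun j : Fin p => (j, (⟨0, hd⟩ : Fin d))))
            (Sum.map (fun i : Fin n => (i, (⟨0, hd⟩ : Fin d)))
              (fun j : Fin p => (j, (⟨0, hd⟩ : Fin d)))) := fun _ _ => rfl
      have hsub : ∀ (X Y : Matrix (Fin n × Fin d) (Fin n × Fin d) ℝ),
          (X - Y).submatrix (fun i : Fin n => (i, (⟨0, hd⟩ : Fin d)))
            (fun i : Fin n => (i, (⟨0, hd⟩ : Fin d)))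
          = X.submatrix (fun i : Fin n => (i, (⟨0, hd⟩ : Fin d)))
              (fun i : Fin n => (i, (⟨0, hd⟩ : Fin d)))
            - Y.submatrix (fun i : Fin n => (i, (⟨0, hd⟩ : Fin d)))
              (fun i : Fin n => (i, (⟨0, hd⟩ : Fin d))) := fun _ _ => rfl
      have hsmul2 : ∀ (c : ℝ) (X : Matrix (Fin n × Fin d) (Fin n × Fin d) ℝ),
          (c • X).submatrix (fun i : Fin n => (i, (⟨0, hd⟩ : Fin d)))
            (fun i : Fin n => (i, (⟨0, hd⟩ : Fin d)))
          = c • X.submatrix (fun i : Fin n => (i, (⟨0, hd⟩ : Fin d)))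
            (fun i : Fin n => (i, (⟨0, hd⟩ : Fin d))) := fun _ _ => rfl
      rw [hadd, hsmul, fromBlocks_submatrix_map, hsub, hsmul2, fromCols_slice,
        slice_mul, slice_mul, slice_mul, slice_mul]
    have h' :
        (-(((Matrix.fromBlocks
          ((A₀ ⊗ₖ (1 : Matrix (Fin d) (Fin d) ℝ))ᵀ * P * (A₀ ⊗ₖ (1 : Matrix (Fin d) (Fin d) ℝ))
              - ρ ^ 2 • P)
          ((A₀ ⊗ₖ (1 : Matrix (Fin d) (Fin d) ℝ))ᵀ * P * (B₀ ⊗ₖ (1 : Matrix (Fin d) (Fin d) ℝ)))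
          ((B₀ ⊗ₖ (1 : Matrix (Fin d) (Fin d) ℝ))ᵀ * P * (A₀ ⊗ₖ (1 : Matrix (Fin d) (Fin d) ℝ)))
          ((B₀ ⊗ₖ (1 : Matrix (Fin d) (Fin d) ℝ))ᵀ * P * (B₀ ⊗ₖ (1 : Matrix (Fin d) (Fin d) ℝ))) +
        lam • ((Matrix.fromCols (C₀ ⊗ₖ (1 : Matrix (Fin d) (Fin d) ℝ))
                  (D₀ ⊗ₖ (1 : Matrix (Fin d) (Fin d) ℝ)))ᵀ *
                (M₀ ⊗ₖ (1 : Matrix (Fin d) (Fin d) ℝ)) *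
                Matrix.fromCols (C₀ ⊗ₖ (1 : Matrix (Fin d) (Fin d) ℝ))
                  (D₀ ⊗ₖ (1 : Matrix (Fin d) (Fin d) ℝ)))).submatrix
          (Sum.map (fun i : Fin n => (i, (⟨0, hd⟩ : Fin d)))
            (fun j : Fin p => (j, (⟨0, hd⟩ : Fin d))))
          (Sum.map (fun i : Fin n => (i, (⟨0, hd⟩ : Fin d)))
            (fun j : Fin p => (j, (⟨0, hd⟩ : Fin d))))))).PosSemidef := h
    rw [e1] at h'
    exact h'
  · rintro ⟨P₀, lam, hP₀, hlam, hpsd⟩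
    refine ⟨P₀ ⊗ₖ (1 : Matrix (Fin d) (Fin d) ℝ), lam, posdef_kron_one hP₀, hlam, ?_⟩
    have h := (psd_kron_one hpsd).submatrix
      (Sum.elim (fun x : Fin n × Fin d => (Sum.inl x.1, x.2))
        (fun x : Fin p × Fin d => (Sum.inr x.1, x.2)))
    have e2 :
        (((-(Matrix.fromBlocks (A₀ᵀ * P₀ * A₀ - ρ ^ 2 • P₀) (A₀ᵀ * P₀ * B₀)
            (B₀ᵀ * P₀ * A₀) (B₀ᵀ * P₀ * B₀) +
          lam • ((Matrix.fromCols C₀ D₀)ᵀ * M₀ * Matrix.fromCols C₀ D₀))) ⊗ₖ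
            (1 : Matrix (Fin d) (Fin d) ℝ)).submatrix
          (Sum.elim (fun x : Fin n × Fin d => (Sum.inl x.1, x.2))
            (fun x : Fin p × Fin d => (Sum.inr x.1, x.2)))
          (Sum.elim (fun x : Fin n × Fin d => (Sum.inl x.1, x.2))
            (fun x : Fin p × Fin d => (Sum.inr x.1, x.2))))
        = -(Matrix.fromBlocks
          ((A₀ ⊗ₖ (1 : Matrix (Fin d) (Fin d) ℝ))ᵀ * (P₀ ⊗ₖ (1 : Matrix (Fin d) (Fin d) ℝ)) *
              (A₀ ⊗ₖ (1 : Matrix (Fin d) (Fin d) ℝ))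
              - ρ ^ 2 • (P₀ ⊗ₖ (1 : Matrix (Fin d) (Fin d) ℝ)))
          ((A₀ ⊗ₖ (1 : Matrix (Fin d) (Fin d) ℝ))ᵀ * (P₀ ⊗ₖ (1 : Matrix (Fin d) (Fin d) ℝ)) *
              (B₀ ⊗ₖ (1 : Matrix (Fin d) (Fin d) ℝ)))
          ((B₀ ⊗ₖ (1 : Matrix (Fin d) (Fin d) ℝ))ᵀ * (P₀ ⊗ₖ (1 : Matrix (Fin d) (Fin d) ℝ)) *
              (A₀ ⊗ₖ (1 : Matrix (Fin d) (Fin d) ℝ)))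
          ((B₀ ⊗ₖ (1 : Matrix (Fin d) (Fin d) ℝ))ᵀ * (P₀ ⊗ₖ (1 : Matrix (Fin d) (Fin d) ℝ)) *
              (B₀ ⊗ₖ (1 : Matrix (Fin d) (Fin d) ℝ))) +
        lam • ((Matrix.fromCols (C₀ ⊗ₖ (1 : Matrix (Fin d) (Fin d) ℝ))
                  (D₀ ⊗ₖ (1 : Matrix (Fin d) (Fin d) ℝ)))ᵀ *
                (M₀ ⊗ₖ (1 : Matrix (Fin d) (Fin d) ℝ)) *
                Matrix.fromCols (C₀ ⊗ₖ (1 : Matrix (Fin d) (Fin d) ℝ))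
                  (D₀ ⊗ₖ (1 : Matrix (Fin d) (Fin d) ℝ)))) := by
      rw [sandwich_kron_one, sandwich_kron_one, sandwich_kron_one, sandwich_kron_one,
        ← smul_kronecker, ← sub_kron_one, fromBlocks_kron, fromCols_kron_sandwich,
        neg_kron_one, add_kronecker, smul_kronecker]
      rfl
    rw [e2] at h
    exact h
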